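/- For all y₀, y₁ ∈ {0,…,d−1}, the encoding |Ψ_{y₀y₁}⟩ = X^{y₀} Z^{y₁} |Ψ⟩ satisfies |⟨y₀|Ψ_{y₀y₁}⟩|² = 1/2 + 1/(2√d), where X, Z are the generalized Pauli matrices. -/

import Mathlib

open Matrix Complex Finset

noncomputable section

def ω (d : ℕ) : ℂ := Complex.exp (2 * ↑Real.pi * Complex.I / (d : ℂ))

def Xp (d : ℕ) : Matrix (Fin d) (Fin d) ℂ :=
  Matrix.of fun j k => if (j : ℕ) = ((k : ℕ) + 1) % d then 1 else 0

def Zp (d : ℕ) : Matrix (Fin d) (Fin d) ℂ :=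
  Matrix.diagonal fun j => ω d ^ (j : ℕ)

def Fm (d : ℕ) : Matrix (Fin d) (Fin d) ℂ :=
  Matrix.of fun j k => ω d ^ ((j : ℕ) * (k : ℕ)) / ((Real.sqrt d : ℝ) : ℂ)

def ket (d : ℕ) (y : Fin d) : Fin d → ℂ := fun j => if j = y then 1 else 0

def e0 (d : ℕ) : Fin d → ℂ := fun j => if (j : ℕ) = 0 then 1 else 0

def Psi (d : ℕ) : Fin d → ℂ :=
  (((Real.sqrt (2 * (1 + 1 / Real.sqrt d)) : ℝ) : ℂ))⁻¹ •
    (e0 d + (Fm d).mulVec (e0 d))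

def dotc {d : ℕ} (v w : Fin d → ℂ) : ℂ := ∑ j, (starRingEnd ℂ) (v j) * w j

def outer {d : ℕ} (v : Fin d → ℂ) : Matrix (Fin d) (Fin d) ℂ :=
  Matrix.of fun i j => v i * (starRingEnd ℂ) (v j)

def enc (d : ℕ) (y₀ y₁ : Fin d) : Fin d → ℂ :=
  ((Xp d ^ (y₀ : ℕ)) * (Zp d ^ (y₁ : ℕ))).mulVec (Psi d)

open Fin.NatCast

lemma val_add_one {d : ℕ} [NeZero d] (k : Fin d) :
    ((k : ℕ) + 1) % d = ((k + 1 : Fin d) : ℕ) := by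
  rw [Fin.val_add, Fin.val_one', Nat.add_mod, Nat.mod_eq_of_lt k.isLt]

lemma Xp_mulVec {d : ℕ} [NeZero d] (v : Fin d → ℂ) (j : Fin d) :
    (Xp d).mulVec v j = v (j - 1) := by
  have hcond : ∀ k : Fin d, ((j : ℕ) = ((k : ℕ) + 1) % d) = (j - 1 = k) := by
    intro k
    rw [val_add_one, Fin.val_eq_val, eq_comm (a := j - 1), eq_comm (a := j)]
    simp [eq_sub_iff_add_eq, eq_comm]
  simp only [Xp, Matrix.mulVec, dotProduct, Matrix.of_apply, hcond,
    ite_mul, one_mul, zero_mul]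
  simpa using Finset.sum_ite_eq Finset.univ (j - 1) v

lemma Xp_pow_mulVec {d : ℕ} [NeZero d] (n : ℕ) (v : Fin d → ℂ) (j : Fin d) :
    ((Xp d) ^ n).mulVec v j = v (j - (n : Fin d)) := by
  induction n generalizing j with
  | zero => simp [Matrix.mulVec_one]
  | succ n ih =>
    rw [pow_succ', ← Matrix.mulVec_mulVec, Xp_mulVec, ih]
    congr 1
    push_cast
    abel

theorem stmt_2 (d : ℕ) (hd : Nat.Prime d) (y₀ y₁ : Fin d) :
    ‖dotc (ket d y₀) (enc d y₀ y₁)‖ ^ 2 = 1 / 2 + 1 / (2 * Real.sqrt d) := by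
  haveI : NeZero d := ⟨hd.pos.ne'⟩
  have hdot : dotc (ket d y₀) (enc d y₀ y₁) = enc d y₀ y₁ y₀ := by
    simp [dotc, ket, eq_comm]
  have hzero : y₀ - ((y₀ : ℕ) : Fin d) = 0 := by
    simp [Fin.cast_val_eq_self]
  have henc : enc d y₀ y₁ y₀ = Psi d 0 := by
    rw [enc, ← Matrix.mulVec_mulVec, Xp_pow_mulVec, hzero]
    simp [Zp, Matrix.diagonal_pow, Matrix.mulVec_diagonal, Pi.pow_apply]
  have hF : (Fm d).mulVec (e0 d) 0 = 1 / ((Real.sqrt d : ℝ) : ℂ) := by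
    simp only [Fm, Matrix.mulVec, dotProduct, Matrix.of_apply, e0]
    rw [Finset.sum_eq_single 0]
    · simp
    · intro b _ hb
      have hb' : (b : ℕ) ≠ 0 := fun h => hb (Fin.ext (by simp [h]))
      simp [hb']
    · simp
  have hPsi : Psi d 0 =
      (((Real.sqrt (2 * (1 + 1 / Real.sqrt d)) : ℝ) : ℂ))⁻¹ *
        (1 + 1 / ((Real.sqrt d : ℝ) : ℂ)) := by
    simp [Psi, e0, hF, smul_eq_mul]
  rw [hdot, henc, hPsi]
  have hdpos : (0 : ℝ) < (d : ℝ) := by exact_mod_cast hd.pos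
  set s : ℝ := Real.sqrt d with hsdef
  have hs : 0 < s := Real.sqrt_pos.mpr hdpos
  set c : ℝ := Real.sqrt (2 * (1 + 1 / s)) with hcdef
  have hc2 : c ^ 2 = 2 * (1 + 1 / s) := Real.sq_sqrt (by positivity)
  have hc : 0 < c := Real.sqrt_pos.mpr (by positivity)
  have hre : ((c : ℂ))⁻¹ * (1 + 1 / ((s : ℝ) : ℂ)) = ((c⁻¹ * (1 + 1 / s) : ℝ) : ℂ) := by
    push_cast
    ring
  rw [hre, Complex.norm_real, Real.norm_eq_abs,
    _root_.abs_of_nonneg (by positivity)]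
  have hgoal : (c⁻¹ * (1 + 1 / s)) ^ 2 = (1 + 1 / s) ^ 2 / c ^ 2 := by
    field_simp
  rw [hgoal, hc2]
  field_simp
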